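/- Three distinct projective lines in P^3 have linearly dependent Plücker vectors if and only if they are coplanar (all contained in a common 3-dimensional subspace of R^4) and concurrent (all containing a common 1-dimensional subspace of R^4). -/

import Mathlib

def plucker (p q : Fin 4 → ℝ) : Fin 6 → ℝ :=
  ![p 0 * q 1 - p 1 * q 0, p 0 * q 2 - p 2 * q 0, p 0 * q 3 - p 3 * q 0,
    p 1 * q 2 - p 2 * q 1, p 1 * q 3 - p 3 * q 1, p 2 * q 3 - p 3 * q 2]

def w3 (v : Fin 4 → ℝ) (m : Fin 6 → ℝ) : Fin 4 → ℝ :=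
  ![v 1 * m 5 - v 2 * m 4 + v 3 * m 3,
    v 0 * m 5 - v 2 * m 2 + v 3 * m 1,
    v 0 * m 4 - v 1 * m 2 + v 3 * m 0,
    v 0 * m 3 - v 1 * m 1 + v 2 * m 0]

def star6 (m : Fin 6 → ℝ) : Fin 6 → ℝ := ![m 5, -(m 4), m 3, m 2, -(m 1), m 0]

def dot4 (a b : Fin 4 → ℝ) : ℝ := a 0 * b 0 + a 1 * b 1 + a 2 * b 2 + a 3 * b 3

section simps
variable (p q : Fin 4 → ℝ) (v : Fin 4 → ℝ) (m : Fin 6 → ℝ)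
@[simp] lemma plucker_0 : plucker p q 0 = p 0 * q 1 - p 1 * q 0 := rfl
@[simp] lemma plucker_1 : plucker p q 1 = p 0 * q 2 - p 2 * q 0 := rfl
@[simp] lemma plucker_2 : plucker p q 2 = p 0 * q 3 - p 3 * q 0 := rfl
@[simp] lemma plucker_3 : plucker p q 3 = p 1 * q 2 - p 2 * q 1 := rfl
@[simp] lemma plucker_4 : plucker p q 4 = p 1 * q 3 - p 3 * q 1 := rfl
@[simp] lemma plucker_5 : plucker p q 5 = p 2 * q 3 - p 3 * q 2 := rfl
@[simp] lemma w3_0 : w3 v m 0 = v 1 * m 5 - v 2 * m 4 + v 3 * m 3 := rfl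
@[simp] lemma w3_1 : w3 v m 1 = v 0 * m 5 - v 2 * m 2 + v 3 * m 1 := rfl
@[simp] lemma w3_2 : w3 v m 2 = v 0 * m 4 - v 1 * m 2 + v 3 * m 0 := rfl
@[simp] lemma w3_3 : w3 v m 3 = v 0 * m 3 - v 1 * m 1 + v 2 * m 0 := rfl
@[simp] lemma star6_0 : star6 m 0 = m 5 := rfl
@[simp] lemma star6_1 : star6 m 1 = -(m 4) := rfl
@[simp] lemma star6_2 : star6 m 2 = m 3 := rfl
@[simp] lemma star6_3 : star6 m 3 = m 2 := rfl
@[simp] lemma star6_4 : star6 m 4 = -(m 1) := rfl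
@[simp] lemma star6_5 : star6 m 5 = m 0 := rfl
end simps

lemma vec4_eq {x y : Fin 4 → ℝ} (h0 : x 0 = y 0) (h1 : x 1 = y 1) (h2 : x 2 = y 2)
    (h3 : x 3 = y 3) : x = y := by
  funext k; fin_cases k
  exacts [h0, h1, h2, h3]

lemma vec6_eq {x y : Fin 6 → ℝ} (h0 : x 0 = y 0) (h1 : x 1 = y 1) (h2 : x 2 = y 2)
    (h3 : x 3 = y 3) (h4 : x 4 = y 4) (h5 : x 5 = y 5) : x = y := by
  funext k; fin_cases k
  exacts [h0, h1, h2, h3, h4, h5]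

lemma plucker_comb_left (p q : Fin 4 → ℝ) (a b : ℝ) :
    plucker (a • p + b • q) q = a • plucker p q := by
  refine vec6_eq ?_ ?_ ?_ ?_ ?_ ?_ <;>
    simp only [plucker_0, plucker_1, plucker_2, plucker_3, plucker_4, plucker_5,
      Pi.add_apply, Pi.smul_apply, smul_eq_mul] <;> ring

lemma plucker_comb_left' (p q : Fin 4 → ℝ) (a b : ℝ) :
    plucker (a • p + b • q) p = -b • plucker p q := by
  refine vec6_eq ?_ ?_ ?_ ?_ ?_ ?_ <;>
    simp only [plucker_0, plucker_1, plucker_2, plucker_3, plucker_4, plucker_5,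
      Pi.add_apply, Pi.smul_apply, smul_eq_mul, neg_mul] <;> ring

lemma plucker_add_right (d x y : Fin 4 → ℝ) :
    plucker d (x + y) = plucker d x + plucker d y := by
  refine vec6_eq ?_ ?_ ?_ ?_ ?_ ?_ <;>
    simp only [plucker_0, plucker_1, plucker_2, plucker_3, plucker_4, plucker_5,
      Pi.add_apply] <;> ring

lemma plucker_smul_right (d x : Fin 4 → ℝ) (c : ℝ) :
    plucker d (c • x) = c • plucker d x := by
  refine vec6_eq ?_ ?_ ?_ ?_ ?_ ?_ <;>
    simp only [plucker_0, plucker_1, plucker_2, plucker_3, plucker_4, plucker_5,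
      Pi.smul_apply, smul_eq_mul] <;> ring

lemma plucker_self (d : Fin 4 → ℝ) : plucker d d = 0 := by
  refine vec6_eq ?_ ?_ ?_ ?_ ?_ ?_ <;>
    simp only [plucker_0, plucker_1, plucker_2, plucker_3, plucker_4, plucker_5,
      Pi.zero_apply] <;> ring

lemma w3_comb (v : Fin 4 → ℝ) (a b : ℝ) (m n : Fin 6 → ℝ) :
    w3 v (a • m + b • n) = a • w3 v m + b • w3 v n := by
  refine vec4_eq ?_ ?_ ?_ ?_ <;>
    simp only [w3_0, w3_1, w3_2, w3_3, Pi.add_apply, Pi.smul_apply, smul_eq_mul] <;> ring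

lemma star6_comb (a b : ℝ) (m n : Fin 6 → ℝ) :
    star6 (a • m + b • n) = a • star6 m + b • star6 n := by
  refine vec6_eq ?_ ?_ ?_ ?_ ?_ ?_ <;>
    simp only [star6_0, star6_1, star6_2, star6_3, star6_4, star6_5,
      Pi.add_apply, Pi.smul_apply, smul_eq_mul] <;> ring

lemma w3_smul (v : Fin 4 → ℝ) (c : ℝ) (m : Fin 6 → ℝ) : w3 v (c • m) = c • w3 v m := by
  refine vec4_eq ?_ ?_ ?_ ?_ <;>
    simp only [w3_0, w3_1, w3_2, w3_3, Pi.smul_apply, smul_eq_mul] <;> ring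
lemma pluckerQ (p q : Fin 4 → ℝ) :
    plucker p q 0 * plucker p q 5 - plucker p q 1 * plucker p q 4
      + plucker p q 2 * plucker p q 3 = 0 := by
  simp only [plucker_0, plucker_1, plucker_2, plucker_3, plucker_4, plucker_5]; ring

lemma plucker_ne_zero {p q : Fin 4 → ℝ} (h : LinearIndependent ℝ ![p, q]) :
    plucker p q ≠ 0 := by
  intro hz
  have hc := LinearIndependent.pair_iff.mp h
  have e0 : p 0 * q 1 - p 1 * q 0 = 0 := congrFun hz 0
  have e1 : p 0 * q 2 - p 2 * q 0 = 0 := congrFun hz 1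
  have e2 : p 0 * q 3 - p 3 * q 0 = 0 := congrFun hz 2
  have e3 : p 1 * q 2 - p 2 * q 1 = 0 := congrFun hz 3
  have e4 : p 1 * q 3 - p 3 * q 1 = 0 := congrFun hz 4
  have e5 : p 2 * q 3 - p 3 * q 2 = 0 := congrFun hz 5
  have m0 : p 0 = 0 := by
    have key : q 0 • p + (-(p 0)) • q = 0 := by
      refine vec4_eq ?_ ?_ ?_ ?_ <;>
        simp only [Pi.add_apply, Pi.smul_apply, smul_eq_mul, Pi.zero_apply]
      · ring
      · linear_combination -e0
      · linear_combination -e1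
      · linear_combination -e2
    exact neg_eq_zero.mp (hc _ _ key).2
  have m1 : p 1 = 0 := by
    have key : q 1 • p + (-(p 1)) • q = 0 := by
      refine vec4_eq ?_ ?_ ?_ ?_ <;>
        simp only [Pi.add_apply, Pi.smul_apply, smul_eq_mul, Pi.zero_apply]
      · linear_combination e0
      · ring
      · linear_combination -e3
      · linear_combination -e4
    exact neg_eq_zero.mp (hc _ _ key).2
  have m2 : p 2 = 0 := by
    have key : q 2 • p + (-(p 2)) • q = 0 := by
      refine vec4_eq ?_ ?_ ?_ ?_ <;>
        simp only [Pi.add_apply, Pi.smul_apply, smul_eq_mul, Pi.zero_apply]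
      · linear_combination e1
      · linear_combination e3
      · ring
      · linear_combination -e5
    exact neg_eq_zero.mp (hc _ _ key).2
  have m3 : p 3 = 0 := by
    have key : q 3 • p + (-(p 3)) • q = 0 := by
      refine vec4_eq ?_ ?_ ?_ ?_ <;>
        simp only [Pi.add_apply, Pi.smul_apply, smul_eq_mul, Pi.zero_apply]
      · linear_combination e2
      · linear_combination e4
      · linear_combination e5
      · ring
    exact neg_eq_zero.mp (hc _ _ key).2
  have hp : p = 0 := by
    refine vec4_eq ?_ ?_ ?_ ?_ <;> simp only [Pi.zero_apply]
    exacts [m0, m1, m2, m3]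
  exact one_ne_zero (hc 1 0 (by simp [hp])).1

lemma mem_span_pair_iff_w3 {p q : Fin 4 → ℝ} (h : LinearIndependent ℝ ![p, q])
    (v : Fin 4 → ℝ) :
    v ∈ Submodule.span ℝ ({p, q} : Set (Fin 4 → ℝ)) ↔ w3 v (plucker p q) = 0 := by
  constructor
  · intro hv
    obtain ⟨a, b, rfl⟩ := Submodule.mem_span_pair.mp hv
    refine vec4_eq ?_ ?_ ?_ ?_ <;>
      simp only [w3_0, w3_1, w3_2, w3_3, plucker_0, plucker_1, plucker_2, plucker_3,
        plucker_4, plucker_5, Pi.add_apply, Pi.smul_apply, smul_eq_mul, Pi.zero_apply] <;> ring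
  · intro hw
    have h0 : v 1 * (p 2 * q 3 - p 3 * q 2) - v 2 * (p 1 * q 3 - p 3 * q 1)
        + v 3 * (p 1 * q 2 - p 2 * q 1) = 0 := congrFun hw 0
    have h1 : v 0 * (p 2 * q 3 - p 3 * q 2) - v 2 * (p 0 * q 3 - p 3 * q 0)
        + v 3 * (p 0 * q 2 - p 2 * q 0) = 0 := congrFun hw 1
    have h2 : v 0 * (p 1 * q 3 - p 3 * q 1) - v 1 * (p 0 * q 3 - p 3 * q 0)
        + v 3 * (p 0 * q 1 - p 1 * q 0) = 0 := congrFun hw 2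
    have h3 : v 0 * (p 1 * q 2 - p 2 * q 1) - v 1 * (p 0 * q 2 - p 2 * q 0)
        + v 2 * (p 0 * q 1 - p 1 * q 0) = 0 := congrFun hw 3
    have conclude : ∀ m A B : ℝ, m ≠ 0 → m • v = A • p + B • q →
        v ∈ Submodule.span ℝ ({p, q} : Set (Fin 4 → ℝ)) := by
      intro m A B hm key
      refine Submodule.mem_span_pair.mpr ⟨m⁻¹ * A, m⁻¹ * B, ?_⟩
      rw [mul_smul, mul_smul, ← smul_add, ← key, smul_smul, inv_mul_cancel₀ hm, one_smul]
    rcases ne_or_eq (p 0 * q 1 - p 1 * q 0) 0 with hl | z0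
    · refine conclude _ (v 0 * q 1 - v 1 * q 0) (p 0 * v 1 - p 1 * v 0) hl ?_
      refine vec4_eq ?_ ?_ ?_ ?_ <;>
        simp only [Pi.add_apply, Pi.smul_apply, smul_eq_mul]
      · ring
      · ring
      · linear_combination h3
      · linear_combination h2
    rcases ne_or_eq (p 0 * q 2 - p 2 * q 0) 0 with hl | z1
    · refine conclude _ (v 0 * q 2 - v 2 * q 0) (p 0 * v 2 - p 2 * v 0) hl ?_
      refine vec4_eq ?_ ?_ ?_ ?_ <;>
        simp only [Pi.add_apply, Pi.smul_apply, smul_eq_mul]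
      · ring
      · linear_combination -h3
      · ring
      · linear_combination h1
    rcases ne_or_eq (p 0 * q 3 - p 3 * q 0) 0 with hl | z2
    · refine conclude _ (v 0 * q 3 - v 3 * q 0) (p 0 * v 3 - p 3 * v 0) hl ?_
      refine vec4_eq ?_ ?_ ?_ ?_ <;>
        simp only [Pi.add_apply, Pi.smul_apply, smul_eq_mul]
      · ring
      · linear_combination -h2
      · linear_combination -h1
      · ring
    rcases ne_or_eq (p 1 * q 2 - p 2 * q 1) 0 with hl | z3
    · refine conclude _ (v 1 * q 2 - v 2 * q 1) (p 1 * v 2 - p 2 * v 1) hl ?_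
      refine vec4_eq ?_ ?_ ?_ ?_ <;>
        simp only [Pi.add_apply, Pi.smul_apply, smul_eq_mul]
      · linear_combination h3
      · ring
      · ring
      · linear_combination h0
    rcases ne_or_eq (p 1 * q 3 - p 3 * q 1) 0 with hl | z4
    · refine conclude _ (v 1 * q 3 - v 3 * q 1) (p 1 * v 3 - p 3 * v 1) hl ?_
      refine vec4_eq ?_ ?_ ?_ ?_ <;>
        simp only [Pi.add_apply, Pi.smul_apply, smul_eq_mul]
      · linear_combination h2
      · ring
      · linear_combination -h0
      · ring
    rcases ne_or_eq (p 2 * q 3 - p 3 * q 2) 0 with hl | z5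
    · refine conclude _ (v 2 * q 3 - v 3 * q 2) (p 2 * v 3 - p 3 * v 2) hl ?_
      refine vec4_eq ?_ ?_ ?_ ?_ <;>
        simp only [Pi.add_apply, Pi.smul_apply, smul_eq_mul]
      · linear_combination h1
      · linear_combination h0
      · ring
      · ring
    exact absurd (vec6_eq z0 z1 z2 z3 z4 z5) (plucker_ne_zero h)
/-- dual contraction: covector of the hyperplane through the plane of `m` and `x`. -/
def dual3 (x : Fin 4 → ℝ) (m : Fin 6 → ℝ) : Fin 4 → ℝ :=
  ![w3 x m 0, -(w3 x m 1), w3 x m 2, -(w3 x m 3)]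

section dual3simps
variable (x : Fin 4 → ℝ) (m : Fin 6 → ℝ)
@[simp] lemma dual3_0 : dual3 x m 0 = w3 x m 0 := rfl
@[simp] lemma dual3_1 : dual3 x m 1 = -(w3 x m 1) := rfl
@[simp] lemma dual3_2 : dual3 x m 2 = w3 x m 2 := rfl
@[simp] lemma dual3_3 : dual3 x m 3 = -(w3 x m 3) := rfl
end dual3simps

lemma dual3_dot_left (x p q : Fin 4 → ℝ) : dot4 (dual3 x (plucker p q)) p = 0 := by
  simp only [dot4, dual3_0, dual3_1, dual3_2, dual3_3, w3_0, w3_1, w3_2, w3_3,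
    plucker_0, plucker_1, plucker_2, plucker_3, plucker_4, plucker_5]
  ring

lemma dual3_dot_right (x p q : Fin 4 → ℝ) : dot4 (dual3 x (plucker p q)) q = 0 := by
  simp only [dot4, dual3_0, dual3_1, dual3_2, dual3_3, w3_0, w3_1, w3_2, w3_3,
    plucker_0, plucker_1, plucker_2, plucker_3, plucker_4, plucker_5]
  ring

lemma dual3_dot_self (x p q : Fin 4 → ℝ) : dot4 (dual3 x (plucker p q)) x = 0 := by
  simp only [dot4, dual3_0, dual3_1, dual3_2, dual3_3, w3_0, w3_1, w3_2, w3_3,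
    plucker_0, plucker_1, plucker_2, plucker_3, plucker_4, plucker_5]
  ring

lemma dual3_eq_zero {x : Fin 4 → ℝ} {m : Fin 6 → ℝ} (h : dual3 x m = 0) : w3 x m = 0 := by
  refine vec4_eq ?_ ?_ ?_ ?_ <;> simp only [Pi.zero_apply]
  · exact congrFun h 0
  · exact neg_eq_zero.mp (congrFun h 1)
  · exact congrFun h 2
  · exact neg_eq_zero.mp (congrFun h 3)

lemma dot4_zero_of_mem_span {φ p q v : Fin 4 → ℝ} (hp : dot4 φ p = 0) (hq : dot4 φ q = 0)
    (hv : v ∈ Submodule.span ℝ ({p, q} : Set (Fin 4 → ℝ))) : dot4 φ v = 0 := by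
  obtain ⟨a, b, rfl⟩ := Submodule.mem_span_pair.mp hv
  simp only [dot4, Pi.add_apply, Pi.smul_apply, smul_eq_mul] at *
  linear_combination a * hp + b * hq

-- star duality : components of w3 φ (star6 (plucker p q))
lemma w3_star_0 (φ p q : Fin 4 → ℝ) :
    w3 φ (star6 (plucker p q)) 0 = p 0 * dot4 φ q - q 0 * dot4 φ p := by
  simp only [w3_0, star6_3, star6_4, star6_5, plucker_0, plucker_1, plucker_2, dot4]; ring

lemma w3_star_1 (φ p q : Fin 4 → ℝ) :
    w3 φ (star6 (plucker p q)) 1 = -(p 1 * dot4 φ q - q 1 * dot4 φ p) := by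
  simp only [w3_1, star6_1, star6_2, star6_5, plucker_0, plucker_3, plucker_4, dot4]; ring

lemma w3_star_2 (φ p q : Fin 4 → ℝ) :
    w3 φ (star6 (plucker p q)) 2 = p 2 * dot4 φ q - q 2 * dot4 φ p := by
  simp only [w3_2, star6_0, star6_2, star6_4, plucker_1, plucker_3, plucker_5, dot4]; ring

lemma w3_star_3 (φ p q : Fin 4 → ℝ) :
    w3 φ (star6 (plucker p q)) 3 = -(p 3 * dot4 φ q - q 3 * dot4 φ p) := by
  simp only [w3_3, star6_0, star6_1, star6_3, plucker_2, plucker_4, plucker_5, dot4]; ring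

lemma perp_of_dot {p q : Fin 4 → ℝ} (φ : Fin 4 → ℝ)
    (hp : dot4 φ p = 0) (hq : dot4 φ q = 0) : w3 φ (star6 (plucker p q)) = 0 := by
  refine vec4_eq ?_ ?_ ?_ ?_ <;> simp only [Pi.zero_apply]
  · rw [w3_star_0, hp, hq]; ring
  · rw [w3_star_1, hp, hq]; ring
  · rw [w3_star_2, hp, hq]; ring
  · rw [w3_star_3, hp, hq]; ring

lemma dot_of_perp {p q : Fin 4 → ℝ} (h : LinearIndependent ℝ ![p, q]) (φ : Fin 4 → ℝ)
    (hw : w3 φ (star6 (plucker p q)) = 0) : dot4 φ p = 0 ∧ dot4 φ q = 0 := by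
  have h0 : p 0 * dot4 φ q - q 0 * dot4 φ p = 0 := by
    rw [← w3_star_0]; exact congrFun hw 0
  have h1 : -(p 1 * dot4 φ q - q 1 * dot4 φ p) = 0 := by
    rw [← w3_star_1]; exact congrFun hw 1
  have h2 : p 2 * dot4 φ q - q 2 * dot4 φ p = 0 := by
    rw [← w3_star_2]; exact congrFun hw 2
  have h3 : -(p 3 * dot4 φ q - q 3 * dot4 φ p) = 0 := by
    rw [← w3_star_3]; exact congrFun hw 3
  have conclude : ∀ m : ℝ, m ≠ 0 → m * dot4 φ p = 0 → m * dot4 φ q = 0 →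
      dot4 φ p = 0 ∧ dot4 φ q = 0 := by
    intro m hm k1 k2
    exact ⟨(mul_eq_zero.mp k1).resolve_left hm, (mul_eq_zero.mp k2).resolve_left hm⟩
  rcases ne_or_eq (p 0 * q 1 - p 1 * q 0) 0 with hl | z0
  · refine conclude _ hl ?_ ?_
    · linear_combination p 1 * h0 + p 0 * h1
    · linear_combination q 1 * h0 + q 0 * h1
  rcases ne_or_eq (p 0 * q 2 - p 2 * q 0) 0 with hl | z1
  · refine conclude _ hl ?_ ?_
    · linear_combination p 2 * h0 - p 0 * h2
    · linear_combination q 2 * h0 - q 0 * h2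
  rcases ne_or_eq (p 0 * q 3 - p 3 * q 0) 0 with hl | z2
  · refine conclude _ hl ?_ ?_
    · linear_combination p 3 * h0 + p 0 * h3
    · linear_combination q 3 * h0 + q 0 * h3
  rcases ne_or_eq (p 1 * q 2 - p 2 * q 1) 0 with hl | z3
  · refine conclude _ hl ?_ ?_
    · linear_combination -(p 2 * h1) - p 1 * h2
    · linear_combination -(q 2 * h1) - q 1 * h2
  rcases ne_or_eq (p 1 * q 3 - p 3 * q 1) 0 with hl | z4
  · refine conclude _ hl ?_ ?_
    · linear_combination -(p 3 * h1) + p 1 * h3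
    · linear_combination -(q 3 * h1) + q 1 * h3
  rcases ne_or_eq (p 2 * q 3 - p 3 * q 2) 0 with hl | z5
  · refine conclude _ hl ?_ ?_
    · linear_combination p 3 * h2 + p 2 * h3
    · linear_combination q 3 * h2 + q 2 * h3
  exact absurd (vec6_eq z0 z1 z2 z3 z4 z5) (plucker_ne_zero h)

lemma finrank_span_pair {x y : Fin 4 → ℝ} (h : LinearIndependent ℝ ![x, y]) :
    Module.finrank ℝ (Submodule.span ℝ ({x, y} : Set (Fin 4 → ℝ))) = 2 := by
  have hr : Set.range ![x, y] = {x, y} := by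
    simp only [Matrix.range_cons, Matrix.range_empty, Set.union_empty, Set.union_singleton]
    exact Set.pair_comm y x
  have := finrank_span_eq_card h
  rw [hr] at this
  simpa using this

def dotMap (φ : Fin 4 → ℝ) : (Fin 4 → ℝ) →ₗ[ℝ] ℝ where
  toFun v := dot4 φ v
  map_add' x y := by simp only [dot4, Pi.add_apply]; ring
  map_smul' c x := by simp only [dot4, Pi.smul_apply, smul_eq_mul, RingHom.id_apply]; ring

lemma finrank_ker_dotMap {φ : Fin 4 → ℝ} (hφ : φ ≠ 0) :
    Module.finrank ℝ (LinearMap.ker (dotMap φ)) = 3 := by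
  have hsurj : LinearMap.range (dotMap φ) = ⊤ := by
    rw [LinearMap.range_eq_top]
    intro r
    have hd : dot4 φ φ ≠ 0 := by
      intro hz
      apply hφ
      simp only [dot4] at hz
      refine vec4_eq ?_ ?_ ?_ ?_ <;> simp only [Pi.zero_apply] <;>
        nlinarith [sq_nonneg (φ 0), sq_nonneg (φ 1), sq_nonneg (φ 2), sq_nonneg (φ 3)]
    refine ⟨(r / dot4 φ φ) • φ, ?_⟩
    show dot4 φ ((r / dot4 φ φ) • φ) = r
    simp only [dot4, Pi.smul_apply, smul_eq_mul] at *
    have hd' : φ 0 ^ 2 + φ 1 ^ 2 + φ 2 ^ 2 + φ 3 ^ 2 ≠ 0 := by simpa only [sq] using hd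
    field_simp
  have h4 : Module.finrank ℝ (Fin 4 → ℝ) = 4 := by
    simp [Module.finrank_pi]
  have := LinearMap.finrank_range_add_finrank_ker (dotMap φ)
  rw [hsurj, h4] at this
  simp only [finrank_top] at this
  have h1 : Module.finrank ℝ ℝ = 1 := Module.finrank_self ℝ
  omega
lemma plucker_zero_right (d : Fin 4 → ℝ) : plucker d 0 = 0 := by
  refine vec6_eq ?_ ?_ ?_ ?_ ?_ ?_ <;>
    simp only [plucker_0, plucker_1, plucker_2, plucker_3, plucker_4, plucker_5,
      Pi.zero_apply] <;> ring

/-- If two lines have vanishing Plücker pairing, the contraction point lies on both. -/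
lemma meet {p q r s : Fin 4 → ℝ}
    (hB : plucker p q 0 * plucker r s 5 + plucker p q 5 * plucker r s 0
        - plucker p q 1 * plucker r s 4 - plucker p q 4 * plucker r s 1
        + plucker p q 2 * plucker r s 3 + plucker p q 3 * plucker r s 2 = 0)
    (j : Fin 4) :
    w3 (w3 p (plucker r s) j • q - w3 q (plucker r s) j • p) (plucker r s) = 0 := by
  simp only [plucker_0, plucker_1, plucker_2, plucker_3, plucker_4, plucker_5] at hB
  fin_cases j
  · show w3 (w3 p (plucker r s) 0 • q - w3 q (plucker r s) 0 • p) (plucker r s) = 0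
    refine vec4_eq ?_ ?_ ?_ ?_ <;>
      simp only [w3_0, w3_1, w3_2, w3_3, plucker_0, plucker_1, plucker_2, plucker_3,
        plucker_4, plucker_5, Pi.sub_apply, Pi.smul_apply, smul_eq_mul, Pi.zero_apply]
    · ring
    · linear_combination (-(r 2 * s 3 - r 3 * s 2)) * hB
    · linear_combination (-(r 1 * s 3 - r 3 * s 1)) * hB
    · linear_combination (-(r 1 * s 2 - r 2 * s 1)) * hB
  · show w3 (w3 p (plucker r s) 1 • q - w3 q (plucker r s) 1 • p) (plucker r s) = 0
    refine vec4_eq ?_ ?_ ?_ ?_ <;>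
      simp only [w3_0, w3_1, w3_2, w3_3, plucker_0, plucker_1, plucker_2, plucker_3,
        plucker_4, plucker_5, Pi.sub_apply, Pi.smul_apply, smul_eq_mul, Pi.zero_apply]
    · linear_combination (r 2 * s 3 - r 3 * s 2) * hB
    · ring
    · linear_combination (-(r 0 * s 3 - r 3 * s 0)) * hB
    · linear_combination (-(r 0 * s 2 - r 2 * s 0)) * hB
  · show w3 (w3 p (plucker r s) 2 • q - w3 q (plucker r s) 2 • p) (plucker r s) = 0
    refine vec4_eq ?_ ?_ ?_ ?_ <;>
      simp only [w3_0, w3_1, w3_2, w3_3, plucker_0, plucker_1, plucker_2, plucker_3,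
        plucker_4, plucker_5, Pi.sub_apply, Pi.smul_apply, smul_eq_mul, Pi.zero_apply]
    · linear_combination (r 1 * s 3 - r 3 * s 1) * hB
    · linear_combination (r 0 * s 3 - r 3 * s 0) * hB
    · ring
    · linear_combination (-(r 0 * s 1 - r 1 * s 0)) * hB
  · show w3 (w3 p (plucker r s) 3 • q - w3 q (plucker r s) 3 • p) (plucker r s) = 0
    refine vec4_eq ?_ ?_ ?_ ?_ <;>
      simp only [w3_0, w3_1, w3_2, w3_3, plucker_0, plucker_1, plucker_2, plucker_3,
        plucker_4, plucker_5, Pi.sub_apply, Pi.smul_apply, smul_eq_mul, Pi.zero_apply]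
    · linear_combination (r 1 * s 2 - r 2 * s 1) * hB
    · linear_combination (r 0 * s 2 - r 2 * s 0) * hB
    · linear_combination (r 0 * s 1 - r 1 * s 0) * hB
    · ring

/-- From a 3-term relation with nonzero first two coefficients, the Plücker pairing
of the first two lines vanishes. -/
lemma B6_eq_zero {c0 c1 c2 : ℝ} {pa qa pb qb pc qc : Fin 4 → ℝ}
    (h0 : c0 ≠ 0) (h1 : c1 ≠ 0)
    (hs : c0 • plucker pa qa + c1 • plucker pb qb + c2 • plucker pc qc = 0) :
    plucker pa qa 0 * plucker pb qb 5 + plucker pa qa 5 * plucker pb qb 0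
      - plucker pa qa 1 * plucker pb qb 4 - plucker pa qa 4 * plucker pb qb 1
      + plucker pa qa 2 * plucker pb qb 3 + plucker pa qa 3 * plucker pb qb 2 = 0 := by
  have hu0 : c0 * plucker pa qa 0 + c1 * plucker pb qb 0 + c2 * plucker pc qc 0 = 0 :=
    congrFun hs 0
  have hu1 : c0 * plucker pa qa 1 + c1 * plucker pb qb 1 + c2 * plucker pc qc 1 = 0 :=
    congrFun hs 1
  have hu2 : c0 * plucker pa qa 2 + c1 * plucker pb qb 2 + c2 * plucker pc qc 2 = 0 :=
    congrFun hs 2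
  have hu3 : c0 * plucker pa qa 3 + c1 * plucker pb qb 3 + c2 * plucker pc qc 3 = 0 :=
    congrFun hs 3
  have hu4 : c0 * plucker pa qa 4 + c1 * plucker pb qb 4 + c2 * plucker pc qc 4 = 0 :=
    congrFun hs 4
  have hu5 : c0 * plucker pa qa 5 + c1 * plucker pb qb 5 + c2 * plucker pc qc 5 = 0 :=
    congrFun hs 5
  have hQa := pluckerQ pa qa
  have hQb := pluckerQ pb qb
  have hQc := pluckerQ pc qc
  have key : c0 * c1 * (plucker pa qa 0 * plucker pb qb 5 + plucker pa qa 5 * plucker pb qb 0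
      - plucker pa qa 1 * plucker pb qb 4 - plucker pa qa 4 * plucker pb qb 1
      + plucker pa qa 2 * plucker pb qb 3 + plucker pa qa 3 * plucker pb qb 2) = 0 := by
    linear_combination (c2 ^ 2) * hQc - (c0 ^ 2) * hQa - (c1 ^ 2) * hQb
      + (c0 * plucker pa qa 0 + c1 * plucker pb qb 0) * hu5
      - (c2 * plucker pc qc 5) * hu0
      - (c0 * plucker pa qa 1 + c1 * plucker pb qb 1) * hu4
      + (c2 * plucker pc qc 4) * hu1
      + (c0 * plucker pa qa 2 + c1 * plucker pb qb 2) * hu3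
      - (c2 * plucker pc qc 3) * hu2
  exact (mul_eq_zero.mp key).resolve_left (mul_ne_zero h0 h1)

lemma span_pair_eq_of_le {x y x' y' : Fin 4 → ℝ} (h : LinearIndependent ℝ ![x, y])
    (h' : LinearIndependent ℝ ![x', y'])
    (hle : Submodule.span ℝ ({x, y} : Set (Fin 4 → ℝ)) ≤ Submodule.span ℝ {x', y'}) :
    Submodule.span ℝ ({x, y} : Set (Fin 4 → ℝ)) = Submodule.span ℝ {x', y'} :=
  Submodule.eq_of_le_of_finrank_eq hle
    (by rw [finrank_span_pair h, finrank_span_pair h'])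

lemma comb_of_rel {M : Type*} [AddCommGroup M] [Module ℝ M] {c0 c1 c2 : ℝ} (hc2 : c2 ≠ 0)
    {A B C : M} (hs : c0 • A + c1 • B + c2 • C = 0) :
    C = (c2⁻¹ * -c0) • A + (c2⁻¹ * -c1) • B := by
  have h2 : c2 • C = (-c0) • A + (-c1) • B := by
    have h3 : c2 • C = -(c0 • A + c1 • B) := by
      rw [eq_neg_iff_add_eq_zero, add_comm]; exact hs
    rw [h3, neg_add, neg_smul, neg_smul]
  calc C = c2⁻¹ • (c2 • C) := by rw [smul_smul, inv_mul_cancel₀ hc2, one_smul]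
  _ = (c2⁻¹ * -c0) • A + (c2⁻¹ * -c1) • B := by
      rw [h2, smul_add, smul_smul, smul_smul]

lemma span_eq_of_rel {c c' : ℝ} {x y x' y' : Fin 4 → ℝ}
    (h : LinearIndependent ℝ ![x, y]) (h' : LinearIndependent ℝ ![x', y'])
    (hc : c ≠ 0) (hc' : c' ≠ 0)
    (hrel : c • plucker x y + c' • plucker x' y' = 0) :
    Submodule.span ℝ ({x, y} : Set (Fin 4 → ℝ)) = Submodule.span ℝ {x', y'} := by
  have h2 : c' • plucker x' y' = -(c • plucker x y) := by
    rw [eq_neg_iff_add_eq_zero, add_comm]; exact hrel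
  have hπ : plucker x' y' = (c'⁻¹ * -c) • plucker x y := by
    calc plucker x' y' = c'⁻¹ • (c' • plucker x' y') := by
          rw [smul_smul, inv_mul_cancel₀ hc', one_smul]
    _ = (c'⁻¹ * -c) • plucker x y := by rw [h2, ← neg_smul, smul_smul]
  have hne : c'⁻¹ * -c ≠ 0 := mul_ne_zero (inv_ne_zero hc') (neg_ne_zero.mpr hc)
  ext v
  rw [mem_span_pair_iff_w3 h, mem_span_pair_iff_w3 h', hπ, w3_smul, smul_eq_zero,
    or_iff_right hne]
lemma forward_main (p q : Fin 3 → (Fin 4 → ℝ))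
    (hli : ∀ i, LinearIndependent ℝ ![p i, q i])
    (hdist : ∀ i j, i ≠ j →
      Submodule.span ℝ {p i, q i} ≠ Submodule.span ℝ {p j, q j})
    (c : Fin 3 → ℝ) (hc0 : c 0 ≠ 0) (hc1 : c 1 ≠ 0) (hc2 : c 2 ≠ 0)
    (hs : c 0 • plucker (p 0) (q 0) + c 1 • plucker (p 1) (q 1)
        + c 2 • plucker (p 2) (q 2) = 0) :
    ((∃ W : Submodule ℝ (Fin 4 → ℝ), Module.finrank ℝ W = 3 ∧
        ∀ i, Submodule.span ℝ {p i, q i} ≤ W) ∧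
     (∃ d : Fin 4 → ℝ, d ≠ 0 ∧
        ∀ i, d ∈ Submodule.span ℝ {p i, q i})) := by
  have hB := B6_eq_zero hc0 hc1 hs
  have hcomb := comb_of_rel hc2 hs
  -- find a coordinate witnessing that line 0 is not inside line 1
  have hex : ∃ j : Fin 4, w3 (p 0) (plucker (p 1) (q 1)) j ≠ 0 ∨
      w3 (q 0) (plucker (p 1) (q 1)) j ≠ 0 := by
    by_contra hno
    push_neg at hno
    have hp0 : p 0 ∈ Submodule.span ℝ ({p 1, q 1} : Set (Fin 4 → ℝ)) :=
      (mem_span_pair_iff_w3 (hli 1) _).mpr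
        (vec4_eq (hno 0).1 (hno 1).1 (hno 2).1 (hno 3).1)
    have hq0 : q 0 ∈ Submodule.span ℝ ({p 1, q 1} : Set (Fin 4 → ℝ)) :=
      (mem_span_pair_iff_w3 (hli 1) _).mpr
        (vec4_eq (hno 0).2 (hno 1).2 (hno 2).2 (hno 3).2)
    have hle : Submodule.span ℝ ({p 0, q 0} : Set (Fin 4 → ℝ)) ≤
        Submodule.span ℝ {p 1, q 1} := by
      rw [Submodule.span_le]
      intro z hz
      simp only [Set.mem_insert_iff, Set.mem_singleton_iff] at hz
      rcases hz with rfl | rfl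
      exacts [hp0, hq0]
    exact hdist 0 1 (by decide) (span_pair_eq_of_le (hli 0) (hli 1) hle)
  obtain ⟨j, hj⟩ := hex
  set d : Fin 4 → ℝ := w3 (p 0) (plucker (p 1) (q 1)) j • q 0
      - w3 (q 0) (plucker (p 1) (q 1)) j • p 0 with hd_def
  have hdmem0 : d ∈ Submodule.span ℝ ({p 0, q 0} : Set (Fin 4 → ℝ)) := by
    refine Submodule.mem_span_pair.mpr
      ⟨-(w3 (q 0) (plucker (p 1) (q 1)) j), w3 (p 0) (plucker (p 1) (q 1)) j, ?_⟩
    rw [hd_def, neg_smul, add_comm, ← sub_eq_add_neg]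
  have hd1w : w3 d (plucker (p 1) (q 1)) = 0 := meet hB j
  have hdmem1 : d ∈ Submodule.span ℝ ({p 1, q 1} : Set (Fin 4 → ℝ)) :=
    (mem_span_pair_iff_w3 (hli 1) _).mpr hd1w
  have hdne : d ≠ 0 := by
    intro h
    have h' : (-(w3 (q 0) (plucker (p 1) (q 1)) j)) • p 0
        + w3 (p 0) (plucker (p 1) (q 1)) j • q 0 = 0 := by
      rw [neg_smul, add_comm, ← sub_eq_add_neg, ← hd_def]; exact h
    obtain ⟨hB0, hA0⟩ := LinearIndependent.pair_iff.mp (hli 0) _ _ h'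
    rcases hj with hj | hj
    · exact hj hA0
    · exact hj (neg_eq_zero.mp hB0)
  have hd0w : w3 d (plucker (p 0) (q 0)) = 0 :=
    (mem_span_pair_iff_w3 (hli 0) _).mp hdmem0
  have hdmem2 : d ∈ Submodule.span ℝ ({p 2, q 2} : Set (Fin 4 → ℝ)) := by
    refine (mem_span_pair_iff_w3 (hli 2) _).mpr ?_
    rw [hcomb, w3_comb, hd0w, hd1w, smul_zero, smul_zero, add_zero]
  -- a point of line 1 outside line 0
  have hx : ∃ x, x ∈ Submodule.span ℝ ({p 1, q 1} : Set (Fin 4 → ℝ)) ∧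
      x ∉ Submodule.span ℝ ({p 0, q 0} : Set (Fin 4 → ℝ)) := by
    by_contra hno
    push_neg at hno
    have hle : Submodule.span ℝ ({p 1, q 1} : Set (Fin 4 → ℝ)) ≤
        Submodule.span ℝ {p 0, q 0} := fun z hz => hno z hz
    exact hdist 1 0 (by decide) (span_pair_eq_of_le (hli 1) (hli 0) hle)
  obtain ⟨x, hxmem, hxnot⟩ := hx
  set φ : Fin 4 → ℝ := dual3 x (plucker (p 0) (q 0)) with hφ_def
  have hφp0 : dot4 φ (p 0) = 0 := dual3_dot_left x (p 0) (q 0)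
  have hφq0 : dot4 φ (q 0) = 0 := dual3_dot_right x (p 0) (q 0)
  have hφx : dot4 φ x = 0 := dual3_dot_self x (p 0) (q 0)
  have hφne : φ ≠ 0 := fun h =>
    hxnot ((mem_span_pair_iff_w3 (hli 0) x).mpr (dual3_eq_zero h))
  have hdx : LinearIndependent ℝ ![d, x] := by
    rw [LinearIndependent.pair_iff' hdne]
    intro a ha
    exact hxnot (ha ▸ Submodule.smul_mem _ a hdmem0)
  have hspan : Submodule.span ℝ ({d, x} : Set (Fin 4 → ℝ)) =
      Submodule.span ℝ ({p 1, q 1} : Set (Fin 4 → ℝ)) := by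
    apply Submodule.eq_of_le_of_finrank_eq
    · rw [Submodule.span_le]
      intro z hz
      simp only [Set.mem_insert_iff, Set.mem_singleton_iff] at hz
      rcases hz with rfl | rfl
      exacts [hdmem1, hxmem]
    · rw [finrank_span_pair hdx, finrank_span_pair (hli 1)]
  have hφd : dot4 φ d = 0 := dot4_zero_of_mem_span hφp0 hφq0 hdmem0
  have hφp1 : dot4 φ (p 1) = 0 := by
    refine dot4_zero_of_mem_span hφd hφx ?_
    rw [hspan]
    exact Submodule.subset_span (by simp)
  have hφq1 : dot4 φ (q 1) = 0 := by
    refine dot4_zero_of_mem_span hφd hφx ?_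
    rw [hspan]
    exact Submodule.subset_span (by simp)
  have hst0 : w3 φ (star6 (plucker (p 0) (q 0))) = 0 := perp_of_dot φ hφp0 hφq0
  have hst1 : w3 φ (star6 (plucker (p 1) (q 1))) = 0 := perp_of_dot φ hφp1 hφq1
  have hst2 : w3 φ (star6 (plucker (p 2) (q 2))) = 0 := by
    rw [hcomb, star6_comb, w3_comb, hst0, hst1, smul_zero, smul_zero, add_zero]
  obtain ⟨hφp2, hφq2⟩ := dot_of_perp (hli 2) φ hst2
  refine ⟨⟨LinearMap.ker (dotMap φ), finrank_ker_dotMap hφne, ?_⟩, ⟨d, hdne, ?_⟩⟩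
  · intro i
    rw [Submodule.span_le]
    intro z hz
    simp only [Set.mem_insert_iff, Set.mem_singleton_iff] at hz
    fin_cases i <;> rcases hz with rfl | rfl <;>
      exact LinearMap.mem_ker.mpr (by assumption)
  · intro i
    fin_cases i
    exacts [hdmem0, hdmem1, hdmem2]

theorem three_lines_dependent_iff_coplanar_concurrent
    (p q : Fin 3 → (Fin 4 → ℝ))
    (hli : ∀ i, LinearIndependent ℝ ![p i, q i])
    (hdist : ∀ i j, i ≠ j →
      Submodule.span ℝ {p i, q i} ≠ Submodule.span ℝ {p j, q j}) :
    ¬ LinearIndependent ℝ (fun i : Fin 3 => plucker (p i) (q i)) ↔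
      ((∃ W : Submodule ℝ (Fin 4 → ℝ), Module.finrank ℝ W = 3 ∧
          ∀ i, Submodule.span ℝ {p i, q i} ≤ W) ∧
       (∃ d : Fin 4 → ℝ, d ≠ 0 ∧
          ∀ i, d ∈ Submodule.span ℝ {p i, q i})) := by
  constructor
  · intro H
    obtain ⟨c, hs, i, hci⟩ := Fintype.not_linearIndependent_iff.mp H
    rw [Fin.sum_univ_three] at hs
    have hs' : c 0 • plucker (p 0) (q 0) + c 1 • plucker (p 1) (q 1)
        + c 2 • plucker (p 2) (q 2) = 0 := hs
    by_cases h0 : c 0 = 0 <;> by_cases h1 : c 1 = 0 <;> by_cases h2 : c 2 = 0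
    -- all zero : contradiction
    · exfalso; fin_cases i
      exacts [hci h0, hci h1, hci h2]
    -- only c2 ≠ 0
    · exfalso
      have : c 2 • plucker (p 2) (q 2) = 0 := by
        rw [h0, h1] at hs'; simpa using hs'
      exact plucker_ne_zero (hli 2) ((smul_eq_zero.mp this).resolve_left h2)
    -- only c1 ≠ 0
    · exfalso
      have : c 1 • plucker (p 1) (q 1) = 0 := by
        rw [h0, h2] at hs'; simpa using hs'
      exact plucker_ne_zero (hli 1) ((smul_eq_zero.mp this).resolve_left h1)
    -- c1, c2 ≠ 0
    · exfalso
      have hrel : c 1 • plucker (p 1) (q 1) + c 2 • plucker (p 2) (q 2) = 0 := by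
        rw [h0] at hs'; simpa using hs'
      exact hdist 1 2 (by decide) (span_eq_of_rel (hli 1) (hli 2) h1 h2 hrel)
    -- only c0 ≠ 0
    · exfalso
      have : c 0 • plucker (p 0) (q 0) = 0 := by
        rw [h1, h2] at hs'; simpa using hs'
      exact plucker_ne_zero (hli 0) ((smul_eq_zero.mp this).resolve_left h0)
    -- c0, c2 ≠ 0
    · exfalso
      have hrel : c 0 • plucker (p 0) (q 0) + c 2 • plucker (p 2) (q 2) = 0 := by
        rw [h1] at hs'; simpa using hs'
      exact hdist 0 2 (by decide) (span_eq_of_rel (hli 0) (hli 2) h0 h2 hrel)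
    -- c0, c1 ≠ 0
    · exfalso
      have hrel : c 0 • plucker (p 0) (q 0) + c 1 • plucker (p 1) (q 1) = 0 := by
        rw [h2] at hs'; simpa using hs'
      exact hdist 0 1 (by decide) (span_eq_of_rel (hli 0) (hli 1) h0 h1 hrel)
    -- all nonzero : main case
    · exact forward_main p q hli hdist c h0 h1 h2 hs'
  · rintro ⟨⟨W, hW3, hsub⟩, ⟨d, hd0, hdmem⟩⟩
    have key : ∀ i : Fin 3, ∃ v cc, (cc : ℝ) ≠ 0 ∧ v ∈ W ∧
        plucker d v = cc • plucker (p i) (q i) := by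
      intro i
      obtain ⟨a, b, hab⟩ := Submodule.mem_span_pair.mp (hdmem i)
      rcases ne_or_eq a 0 with ha | rfl
      · refine ⟨q i, a, ha, hsub i (Submodule.subset_span (by simp)), ?_⟩
        rw [← hab]
        exact plucker_comb_left (p i) (q i) a b
      · have hb : b ≠ 0 := by
          rintro rfl
          apply hd0
          rw [← hab]; simp
        refine ⟨p i, -b, neg_ne_zero.mpr hb,
          hsub i (Submodule.subset_span (by simp)), ?_⟩
        rw [← hab]
        exact plucker_comb_left' (p i) (q i) 0 b
    choose v cc hcc hvW hpl using key
    have hdW : d ∈ W := hsub 0 (hdmem 0)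
    set f : Fin 4 → W := ![⟨d, hdW⟩, ⟨v 0, hvW 0⟩, ⟨v 1, hvW 1⟩, ⟨v 2, hvW 2⟩] with hf_def
    have hnli : ¬ LinearIndependent ℝ f := by
      intro hLI
      have hcard := hLI.fintype_card_le_finrank
      rw [hW3] at hcard
      simp at hcard
    obtain ⟨g, hg, i, hgi⟩ := Fintype.not_linearIndependent_iff.mp hnli
    have hg' : g 0 • d + g 1 • v 0 + g 2 • v 1 + g 3 • v 2 = 0 := by
      have h2 : ((∑ i, g i • f i : W) : Fin 4 → ℝ) = 0 := by rw [hg]; rfl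
      rw [Fin.sum_univ_four] at h2
      simpa [hf_def, Matrix.cons_val_zero, Matrix.cons_val_one, Matrix.head_cons,
        Matrix.cons_val_two, Matrix.cons_val_three, Matrix.tail_cons, add_assoc] using h2
    have happ : g 1 • plucker d (v 0) + g 2 • plucker d (v 1)
        + g 3 • plucker d (v 2) = 0 := by
      have h0 : plucker d (g 0 • d + g 1 • v 0 + g 2 • v 1 + g 3 • v 2) = 0 := by
        rw [hg']; exact plucker_zero_right d
      rw [plucker_add_right, plucker_add_right, plucker_add_right,
        plucker_smul_right, plucker_smul_right, plucker_smul_right, plucker_smul_right,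
        plucker_self, smul_zero, zero_add] at h0
      exact h0
    by_cases ht : g 1 = 0 ∧ g 2 = 0 ∧ g 3 = 0
    · exfalso
      have hg0 : g 0 ≠ 0 := by
        fin_cases i
        · exact hgi
        · exact absurd ht.1 hgi
        · exact absurd ht.2.1 hgi
        · exact absurd ht.2.2 hgi
      apply hd0
      have hzz : g 0 • d = 0 := by
        have := hg'
        rw [ht.1, ht.2.1, ht.2.2] at this
        simpa using this
      exact (smul_eq_zero.mp hzz).resolve_left hg0
    · rw [Fintype.not_linearIndependent_iff]
      refine ⟨![g 1 * cc 0, g 2 * cc 1, g 3 * cc 2], ?_, ?_⟩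
      · rw [Fin.sum_univ_three]
        simp only [Matrix.cons_val_zero, Matrix.cons_val_one, Matrix.head_cons,
          Matrix.cons_val_two, Matrix.tail_cons]
        rw [mul_smul, mul_smul, mul_smul, ← hpl 0, ← hpl 1, ← hpl 2]
        exact happ
      · push_neg at ht
        rcases ne_or_eq (g 1) 0 with h | h1z
        · exact ⟨0, mul_ne_zero h (hcc 0)⟩
        rcases ne_or_eq (g 2) 0 with h | h2z
        · exact ⟨1, mul_ne_zero h (hcc 1)⟩
        rcases ne_or_eq (g 3) 0 with h | h3z
        · exact ⟨2, mul_ne_zero h (hcc 2)⟩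
        exact absurd h3z (ht h1z h2z)
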